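/- Let f ∈ C([0,1]^d) and suppose g : ℝ^d → ℝ satisfies |g(x) − f(x)| ≤ ε for all x ∈ [0,1]^d \ Ω([0,1]^d, K, δ), where K ∈ ℕ⁺, δ ∈ (0, 1/(3K)], and Ω([0,1]^d,K,δ) is the trifling region. Define φ₀ = g and φ_{i+1}(x) = mid(φ_i(x − δe_{i+1}), φ_i(x), φ_i(x + δe_{i+1})) for i = 0,…,d−1, where mid returns the middle value of three inputs and {e_i} is the standard basis of ℝ^d. Then φ = φ_d satisfies |φ(x) − f(x)| ≤ ε + d·ω_f(δ) for all x ∈ [0,1]^d. -/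

import Mathlib

/-- The unit cube `[0,1]^d` in Euclidean space. -/
def unitCube (d : ℕ) : Set (EuclideanSpace ℝ (Fin d)) :=
  {x | ∀ i, x i ∈ Set.Icc (0 : ℝ) 1}

/-- Modulus of continuity of `f` on `[0,1]^d` with respect to the Euclidean norm. -/
noncomputable def modulus (d : ℕ) (f : EuclideanSpace ℝ (Fin d) → ℝ) (t : ℝ) : ℝ :=
  sSup {r : ℝ | ∃ x ∈ unitCube d, ∃ y ∈ unitCube d, ‖x - y‖ ≤ t ∧ r = |f x - f y|}

/-- The trifling region `Ω([0,1]^d, K, δ)`. -/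
def trifling (d K : ℕ) (δ : ℝ) : Set (EuclideanSpace ℝ (Fin d)) :=
  ⋃ j : Fin d,
    {x ∈ unitCube d | x j ∈ ⋃ k ∈ Finset.Ico 1 K, Set.Ioo ((k : ℝ) / K - δ) ((k : ℝ) / K)}

/-- The middle (median) value of three real numbers. -/
noncomputable def mid (a b c : ℝ) : ℝ := max (min a b) (min (max a b) c)

/-- The iterated "mid" construction `φ_i` from the paper. -/
noncomputable def phiIter (d : ℕ) (δ : ℝ) (g : EuclideanSpace ℝ (Fin d) → ℝ) :
    ℕ → EuclideanSpace ℝ (Fin d) → ℝ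
  | 0 => g
  | (i + 1) => fun x =>
      if h : i < d then
        mid (phiIter d δ g i (x - δ • EuclideanSpace.single (⟨i, h⟩ : Fin d) 1))
            (phiIter d δ g i x)
            (phiIter d δ g i (x + δ • EuclideanSpace.single (⟨i, h⟩ : Fin d) 1))
      else phiIter d δ g i x

/-- The 1-dimensional "bad" set. -/
def badS (K : ℕ) (δ : ℝ) : Set ℝ :=
  ⋃ k ∈ Finset.Ico 1 K, Set.Ioo ((k : ℝ) / K - δ) ((k : ℝ) / K)

lemma mem_badS {K : ℕ} {δ u : ℝ} :
    u ∈ badS K δ ↔ ∃ k : ℕ, 1 ≤ k ∧ k < K ∧ (k : ℝ) / K - δ < u ∧ u < (k : ℝ) / K := by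
  constructor
  · intro h
    simp only [badS, Set.mem_iUnion, exists_prop, Finset.mem_Ico, Set.mem_Ioo] at h
    obtain ⟨k, ⟨h1, h2⟩, h3, h4⟩ := h
    exact ⟨k, h1, h2, h3, h4⟩
  · rintro ⟨k, h1, h2, h3, h4⟩
    simp only [badS, Set.mem_iUnion, exists_prop, Finset.mem_Ico, Set.mem_Ioo]
    exact ⟨k, ⟨h1, h2⟩, h3, h4⟩

lemma mid_close {t B a b c : ℝ}
    (h : (|a - t| ≤ B ∧ |b - t| ≤ B) ∨ (|a - t| ≤ B ∧ |c - t| ≤ B) ∨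
      (|b - t| ≤ B ∧ |c - t| ≤ B)) :
    |mid a b c - t| ≤ B := by
  have h1 : min a b ≤ mid a b c := le_max_left _ _
  have h2 : mid a b c ≤ max a b :=
    max_le (le_trans (min_le_left _ _) (le_max_left _ _))
      (le_trans (min_le_left _ _) le_rfl)
  have h3 : mid a b c ≤ max a c :=
    max_le (le_trans (min_le_left _ _) (le_max_left _ _))
      (le_trans (min_le_right _ _) (le_max_right _ _))
  have h4 : mid a b c ≤ max b c :=
    max_le (le_trans (min_le_right _ _) (le_max_left _ _))
      (le_trans (min_le_right _ _) (le_max_right _ _))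
  have h5 : min a c ≤ mid a b c := by
    rcases le_total a b with hab | hab
    · exact le_trans (le_trans (min_le_left _ _) (le_min le_rfl hab)) (le_max_left _ _)
    · refine le_trans ?_ (le_max_right _ _)
      have : max a b = a := max_eq_left hab
      rw [this]
  have h6 : min b c ≤ mid a b c := by
    rcases le_total b a with hba | hba
    · exact le_trans (le_trans (min_le_left _ _) (le_min hba le_rfl)) (le_max_left _ _)
    · refine le_trans ?_ (le_max_right _ _)
      have : max a b = b := max_eq_right hba
      rw [this]
  rw [abs_le]
  rcases h with ⟨ha, hb⟩ | ⟨ha, hc⟩ | ⟨hb, hc⟩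
  · rw [abs_le] at ha hb
    constructor
    · have : t - B ≤ min a b := le_min (by linarith [ha.1]) (by linarith [hb.1])
      linarith
    · have : max a b ≤ t + B := max_le (by linarith [ha.2]) (by linarith [hb.2])
      linarith
  · rw [abs_le] at ha hc
    constructor
    · have : t - B ≤ min a c := le_min (by linarith [ha.1]) (by linarith [hc.1])
      linarith
    · have : max a c ≤ t + B := max_le (by linarith [ha.2]) (by linarith [hc.2])
      linarith
  · rw [abs_le] at hb hc
    constructor
    · have : t - B ≤ min b c := le_min (by linarith [hb.1]) (by linarith [hc.1])
      linarith
    · have : max b c ≤ t + B := max_le (by linarith [hb.2]) (by linarith [hc.2])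
      linarith

lemma bad_pair {K : ℕ} (hK : 0 < K) {δ : ℝ} (hδ0 : 0 < δ) (hδ3 : δ ≤ 1 / (3 * K))
    {u v : ℝ} (hu : u ∈ badS K δ) (hv : v ∈ badS K δ)
    (h1 : δ ≤ v - u) (h2 : v - u ≤ 2 * δ) : False := by
  obtain ⟨k, hk1, hkK, hku1, hku2⟩ := mem_badS.mp hu
  obtain ⟨m, hm1, hmK, hmv1, hmv2⟩ := mem_badS.mp hv
  have hKpos : (0 : ℝ) < K := by exact_mod_cast hK
  have hδK : 3 * (K : ℝ) * δ ≤ 1 := by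
    have h3K : (0 : ℝ) < 3 * K := by positivity
    have := (le_div_iff₀ h3K).mp hδ3
    linarith
  -- v > k/K since v ≥ u + δ > k/K - δ + δ
  have hvk : (k : ℝ) / K < v := by linarith
  -- so m/K > k/K, hence m > k
  have hkm : (k : ℝ) < m := by
    have := lt_trans hvk hmv2
    rwa [div_lt_div_iff₀ hKpos hKpos, mul_lt_mul_iff_of_pos_right hKpos] at this
  have hkm' : (k : ℝ) + 1 ≤ m := by exact_mod_cast (by exact_mod_cast hkm : k < m)
  -- m/K - δ < v ≤ u + 2δ < k/K + 2δ  so m/K < k/K + 3δ ≤ k/K + 1/K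
  have : (m : ℝ) / K < (k : ℝ) / K + 3 * δ := by linarith
  have h3δ : 3 * δ ≤ 1 / K := by
    rw [le_div_iff₀ hKpos]; linarith [hδK]
  have : (m : ℝ) / K < ((k : ℝ) + 1) / K := by
    rw [add_div]
    have : (1 : ℝ) / K ≥ 3 * δ := h3δ
    linarith
  rw [div_lt_div_iff₀ hKpos hKpos, mul_lt_mul_iff_of_pos_right hKpos] at this
  linarith

/-- One-dimensional key fact: at least two of `t - δ, t, t + δ` are "good". -/
lemma oneD {K : ℕ} (hK : 0 < K) {δ : ℝ} (hδ0 : 0 < δ) (hδ3 : δ ≤ 1 / (3 * K))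
    {t : ℝ} (ht : t ∈ Set.Icc (0 : ℝ) 1) :
    let G : ℝ → Prop := fun u => u ∈ Set.Icc (0 : ℝ) 1 ∧ u ∉ badS K δ
    (G (t - δ) ∧ G t) ∨ (G (t - δ) ∧ G (t + δ)) ∨ (G t ∧ G (t + δ)) := by
  intro G
  have hKpos : (0 : ℝ) < K := by exact_mod_cast hK
  have hδK : 3 * (K : ℝ) * δ ≤ 1 := by
    have h3K : (0 : ℝ) < 3 * K := by positivity
    have := (le_div_iff₀ h3K).mp hδ3
    linarith
  have hKδ : δ ≤ 1 / (3 : ℝ) := by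
    rw [le_div_iff₀ (by norm_num : (0:ℝ) < 3)]
    have h1K : (1 : ℝ) ≤ K := by exact_mod_cast hK
    nlinarith
  obtain ⟨ht0, ht1⟩ := ht
  -- characterize failure
  have fail : ∀ u, ¬ G u → (u < 0 ∨ 1 < u ∨ u ∈ badS K δ) := by
    intro u hu
    by_cases h0 : u < 0
    · exact Or.inl h0
    by_cases h1 : 1 < u
    · exact Or.inr (Or.inl h1)
    right; right
    by_contra hb
    exact hu ⟨⟨le_of_not_gt h0, le_of_not_gt h1⟩, hb⟩
  -- helper facts about bad elements
  have badlb : ∀ u, u ∈ badS K δ → 1 / (K : ℝ) - δ < u := by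
    intro u hu
    obtain ⟨k, hk1, _, hku1, _⟩ := mem_badS.mp hu
    have : (1 : ℝ) / K ≤ (k : ℝ) / K := by
      gcongr
      exact_mod_cast hk1
    linarith
  have badub : ∀ u, u ∈ badS K δ → u < 1 - 1 / (K : ℝ) := by
    intro u hu
    obtain ⟨k, hk1, hkK, _, hku2⟩ := mem_badS.mp hu
    have hkK' : (k : ℝ) ≤ (K : ℝ) - 1 := by
      have : k + 1 ≤ K := hkK
      have : (k : ℝ) + 1 ≤ K := by exact_mod_cast this
      linarith
    have : (k : ℝ) / K ≤ ((K : ℝ) - 1) / K := by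
      gcongr
    have heq : ((K : ℝ) - 1) / K = 1 - 1 / K := by field_simp
    rw [heq] at this
    linarith
  have h1K3δ : 3 * δ ≤ 1 / (K : ℝ) := by
    rw [le_div_iff₀ hKpos]; linarith
  -- pairwise exclusions of failure
  have pair : ∀ u v, ¬ G u → ¬ G v → δ ≤ v - u → v - u ≤ 2 * δ →
      u ≤ t → t ≤ v → False := by
    intro u v hu hv hd1 hd2 hut htv
    rcases fail u hu with hu0 | hu1 | hub
    · -- u < 0
      rcases fail v hv with hv0 | hv1 | hvb
      · linarith
      · linarith
      · have := badlb v hvb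
        -- v ≥ 1/K - δ but v = u + something ≤ u + 2δ < 2δ
        have : v < 2 * δ := by linarith
        linarith [badlb v hvb]
    · -- 1 < u impossible since u ≤ t ≤ 1
      linarith
    rcases fail v hv with hv0 | hv1 | hvb
    · linarith
    · -- 1 < v; then u > 1 - 2δ but bad u < 1 - 1/K ≤ 1 - 3δ
      have := badub u hub
      linarith
    · exact bad_pair hK hδ0 hδ3 hub hvb hd1 hd2
  by_cases g1 : G (t - δ) <;> by_cases g2 : G t <;> by_cases g3 : G (t + δ)
  · exact Or.inl ⟨g1, g2⟩
  · exact Or.inl ⟨g1, g2⟩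
  · exact Or.inr (Or.inl ⟨g1, g3⟩)
  · exact absurd (pair t (t + δ) g2 g3 (by linarith) (by linarith)
      (by linarith) (by linarith)) id
  · exact Or.inr (Or.inr ⟨g2, g3⟩)
  · exact absurd (pair (t - δ) (t + δ) g1 g3 (by linarith) (by linarith)
      (by linarith) (by linarith)) id
  · exact absurd (pair (t - δ) t g1 g2 (by linarith) (by linarith)
      (by linarith) (by linarith)) id
  · exact absurd (pair t (t + δ) g2 g3 (by linarith) (by linarith)
      (by linarith) (by linarith)) id

lemma unitCube_compact (d : ℕ) : IsCompact (unitCube d) := by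
  have h : unitCube d =
      (EuclideanSpace.equiv (Fin d) ℝ) ⁻¹' (Set.univ.pi fun _ => Set.Icc (0 : ℝ) 1) := by
    ext x
    simp only [unitCube, Set.mem_setOf_eq, Set.mem_preimage, Set.mem_pi, Set.mem_univ,
      forall_true_left]
    exact Iff.rfl
  rw [h]
  have hc : IsCompact (Set.univ.pi fun _ : Fin d => Set.Icc (0 : ℝ) 1) :=
    isCompact_univ_pi fun _ => isCompact_Icc
  exact ((EuclideanSpace.equiv (Fin d) ℝ).toHomeomorph.isCompact_preimage).mpr hc

theorem stmt_19 (d K : ℕ) (hd : 0 < d) (hK : 0 < K) (δ : ℝ)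
    (hδ : δ ∈ Set.Ioc 0 (1 / (3 * K : ℝ))) (ε : ℝ) (hε : 0 < ε)
    (f : EuclideanSpace ℝ (Fin d) → ℝ) (hf : ContinuousOn f (unitCube d))
    (g : EuclideanSpace ℝ (Fin d) → ℝ)
    (hg : ∀ x ∈ unitCube d \ trifling d K δ, |g x - f x| ≤ ε) :
    ∀ x ∈ unitCube d, |phiIter d δ g d x - f x| ≤ ε + d * modulus d f δ := by
  obtain ⟨hδ0, hδ3⟩ := hδ
  set ω := modulus d f δ with hω
  -- boundedness of f on the cube
  obtain ⟨M, hM⟩ := (unitCube_compact d).exists_bound_of_continuousOn hf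
  have h0cube : (0 : EuclideanSpace ℝ (Fin d)) ∈ unitCube d := by
    intro i; simp [Set.mem_Icc]
  have hbdd : BddAbove {r : ℝ | ∃ x ∈ unitCube d, ∃ y ∈ unitCube d,
      ‖x - y‖ ≤ δ ∧ r = |f x - f y|} := by
    refine ⟨2 * M, ?_⟩
    rintro r ⟨x, hx, y, hy, -, rfl⟩
    calc |f x - f y| ≤ |f x| + |f y| := abs_sub _ _
      _ ≤ M + M := add_le_add (hM x hx) (hM y hy)
      _ = 2 * M := by ring
  have hω0 : 0 ≤ ω := by
    apply le_csSup hbdd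
    exact ⟨0, h0cube, 0, h0cube, by simp [le_of_lt hδ0], by simp⟩
  have hωle : ∀ x ∈ unitCube d, ∀ y ∈ unitCube d, ‖x - y‖ ≤ δ → |f x - f y| ≤ ω := by
    intro x hx y hy hxy
    exact le_csSup hbdd ⟨x, hx, y, hy, hxy, rfl⟩
  have key : ∀ i, i ≤ d → ∀ x, x ∈ unitCube d →
      (∀ j : Fin d, i ≤ (j : ℕ) → x j ∉ badS K δ) →
      |phiIter d δ g i x - f x| ≤ ε + i * ω := by
    intro i
    induction i with
    | zero =>
      intro _ x hx hgood
      have hnt : x ∉ trifling d K δ := by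
        intro hmem
        simp only [trifling, Set.mem_iUnion, Set.mem_setOf_eq] at hmem
        obtain ⟨j, _, hj⟩ := hmem
        apply hgood j (Nat.zero_le _)
        rw [mem_badS]
        obtain ⟨k, hk, hkm⟩ := hj
        exact ⟨k, (Finset.mem_Ico.mp hk).1, (Finset.mem_Ico.mp hk).2, hkm.1, hkm.2⟩
      have := hg x ⟨hx, hnt⟩
      simpa [phiIter] using this
    | succ i ih =>
      intro hle x hx hgood
      have hi : i < d := hle
      have hid : i ≤ d := le_of_lt hi
      set e : EuclideanSpace ℝ (Fin d) := EuclideanSpace.single (⟨i, hi⟩ : Fin d) (1 : ℝ)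
        with he
      set t : ℝ := x ⟨i, hi⟩ with htdef
      have ht : t ∈ Set.Icc (0 : ℝ) 1 := hx ⟨i, hi⟩
      -- the shifted-point helper
      have hpt : ∀ σ : ℝ, |σ| ≤ δ → (t + σ) ∈ Set.Icc (0 : ℝ) 1 → (t + σ) ∉ badS K δ →
          |phiIter d δ g i (x + σ • e) - f x| ≤ ε + (i : ℝ) * ω + ω := by
        intro σ hσ hIcc hbad
        set y : EuclideanSpace ℝ (Fin d) := x + σ • e with hy
        have hyj : ∀ j : Fin d, y j = if j = ⟨i, hi⟩ then t + σ else x j := by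
          intro j
          have : y j = x j + σ * (EuclideanSpace.single (⟨i, hi⟩ : Fin d) (1 : ℝ)) j := by
            simp [hy, he]
          rw [this, EuclideanSpace.single_apply]
          by_cases hj : j = (⟨i, hi⟩ : Fin d)
          · subst hj
            simp [htdef]
          · simp [hj]
        have hycube : y ∈ unitCube d := by
          intro j
          rw [hyj j]
          by_cases hj : j = (⟨i, hi⟩ : Fin d)
          · simpa [hj] using hIcc
          · simpa [hj] using hx j
        have hygood : ∀ j : Fin d, i ≤ (j : ℕ) → y j ∉ badS K δ := by
          intro j hj
          rw [hyj j]
          by_cases hjeq : j = (⟨i, hi⟩ : Fin d)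
          · simpa [hjeq] using hbad
          · have hji : (j : ℕ) ≠ i := fun h => hjeq (Fin.ext h)
            have : i + 1 ≤ (j : ℕ) := lt_of_le_of_ne hj (Ne.symm hji)
            simpa [hjeq] using hgood j this
        have hIH := ih hid y hycube hygood
        have hnorm : ‖y - x‖ ≤ δ := by
          have : y - x = σ • e := by
            simp [hy]
          rw [this, norm_smul, he, EuclideanSpace.norm_single]
          simp only [norm_one, mul_one]
          exact hσ
        have hfy : |f y - f x| ≤ ω := hωle y hycube x hx hnorm
        calc |phiIter d δ g i y - f x|
            ≤ |phiIter d δ g i y - f y| + |f y - f x| := abs_sub_le _ _ _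
          _ ≤ (ε + i * ω) + ω := add_le_add hIH hfy
      -- unfold phiIter
      have hunfold : phiIter d δ g (i + 1) x =
          mid (phiIter d δ g i (x - δ • e)) (phiIter d δ g i x)
            (phiIter d δ g i (x + δ • e)) := by
        simp [phiIter, hi, he]
      rw [hunfold]
      have hsub : x - δ • e = x + (-δ) • e := by
        rw [neg_smul, sub_eq_add_neg]
      have hxself : x = x + (0 : ℝ) • e := by simp
      have hB : ((i : ℝ) + 1) * ω = (i : ℝ) * ω + ω := by ring
      have hcast : ((i + 1 : ℕ) : ℝ) = (i : ℝ) + 1 := by push_cast; ring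
      rw [hcast, hB, ← add_assoc]
      have h1d := oneD hK hδ0 hδ3 ht
      simp only at h1d
      have habs : ∀ σ : ℝ, |σ| ≤ δ →
          (t + σ ∈ Set.Icc (0:ℝ) 1 ∧ t + σ ∉ badS K δ) →
          |phiIter d δ g i (x + σ • e) - f x| ≤ ε + (i : ℝ) * ω + ω := by
        intro σ h1 h2
        exact hpt σ h1 h2.1 h2.2
      rcases h1d with ⟨hA, hB'⟩ | ⟨hA, hC⟩ | ⟨hB', hC⟩
      · apply mid_close
        left
        constructor
        · rw [hsub]
          apply habs (-δ) (by rw [abs_neg, abs_of_pos hδ0])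
          constructor
          · have : t - δ = t + -δ := by ring
            rw [← this]; exact hA.1
          · have : t - δ = t + -δ := by ring
            rw [← this]; exact hA.2
        · have h0 := habs 0 (by simp [le_of_lt hδ0]) (by simpa using hB')
          simpa using h0
      · apply mid_close
        right; left
        constructor
        · rw [hsub]
          apply habs (-δ) (by rw [abs_neg, abs_of_pos hδ0])
          constructor
          · have : t - δ = t + -δ := by ring
            rw [← this]; exact hA.1
          · have : t - δ = t + -δ := by ring
            rw [← this]; exact hA.2
        · exact habs δ (by rw [abs_of_pos hδ0]) hC
      · apply mid_close
        right; right
        constructor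
        · have h0 := habs 0 (by simp [le_of_lt hδ0]) (by simpa using hB')
          simpa using h0
        · exact habs δ (by rw [abs_of_pos hδ0]) hC
  intro x hx
  exact key d le_rfl x hx fun j hj => absurd hj (Nat.not_le.mpr j.isLt)
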